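/- (General extended division, Theorem 2, existence form.) For every n ≥ 3 and every word W = w₁·w₂⋯w_k in the extended letters ₐσᵢ^{±1} (a ∈ ℤ/4ℤ, 1 ≤ i ≤ n−1), there exist a word P in the extended generators (no inverses) and a word Q in the extended generators (no inverses) such that the product of W in B_n equals (product of P)·(product of Q)⁻¹, the total length satisfies |P| + |Q| = |W|, the length |P| equals the number of positive letters of W, and the sequence of subscripts i occurring in the letters of P followed by the reversed sequence of subscripts of Q equals a rearrangement matching the sequence of subscripts i of W (W and P·Q⁻¹ have the same sequence of right indices). -/

import Mathlib

namespace Braid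

/-- The braid relations on `n` strands: generators `0, …, n-2` stand for `σ₁, …, σ_{n-1}`. -/
def braidRels (n : ℕ) : Set (FreeGroup (Fin (n - 1))) :=
  { r | (∃ i j : Fin (n - 1), (i : ℕ) + 2 ≤ (j : ℕ) ∧
          r = FreeGroup.of i * FreeGroup.of j * (FreeGroup.of i)⁻¹ * (FreeGroup.of j)⁻¹) ∨
        (∃ i j : Fin (n - 1), (j : ℕ) = (i : ℕ) + 1 ∧
          r = FreeGroup.of i * FreeGroup.of j * FreeGroup.of i *
              (FreeGroup.of j * FreeGroup.of i * FreeGroup.of j)⁻¹) }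

/-- The braid group `B_n`, presented by `σ₁, …, σ_{n-1}` and the braid relations. -/
abbrev BraidGroup (n : ℕ) := PresentedGroup (braidRels n)

/-- The standard generator `σ i` of `B_n` (1-indexed); junk value `1` out of range. -/
def s (n : ℕ) (i : ℕ) : BraidGroup n :=
  if h : 1 ≤ i ∧ i ≤ n - 1 then PresentedGroup.of (⟨i - 1, by omega⟩ : Fin (n - 1)) else 1

/-- The Garside half-twist `Δ = (σ₁)(σ₂σ₁)(σ₃σ₂σ₁)⋯(σ_{n-1}σ_{n-2}⋯σ₁)` in `B_n`. -/
def halfTwist (n : ℕ) : BraidGroup n :=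
  ((List.range (n - 1)).map
    (fun r => (((List.range (r + 1)).reverse).map (fun k => s n (k + 1))).prod)).prod

/-- The submonoid of positive braids of `B_n`: the monoid generated by `σ₁, …, σ_{n-1}`. -/
def positive (n : ℕ) : Submonoid (BraidGroup n) :=
  Submonoid.closure (s n '' Set.Icc 1 (n - 1))

/-- The extended generators `ₐσᵢ` of `B_n`:
`₀σᵢ = σᵢ`, `₁σᵢ = Δ·σᵢ⁻¹`, `₂σᵢ = σ_{n-i}`, `₃σᵢ = Δ·σ_{n-i}⁻¹`. -/
def es (n : ℕ) (a : ZMod 4) (i : ℕ) : BraidGroup n :=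
  if a = 0 then s n i
  else if a = 1 then halfTwist n * (s n i)⁻¹
  else if a = 2 then s n (n - i)
  else halfTwist n * (s n (n - i))⁻¹

/-- An extended letter `ₐσᵢ^{e}` is coded as `(a, i, e)`, where `e = true` means
exponent `+1` (a positive letter) and `e = false` means exponent `-1` (a negative letter). -/
abbrev ELetter : Type := ZMod 4 × ℕ × Bool

/-- The element of `B_n` represented by an extended letter. -/
def eletterProd (n : ℕ) (x : ELetter) : BraidGroup n :=
  if x.2.2 then es n x.1 x.2.1 else (es n x.1 x.2.1)⁻¹

/-- The element of `B_n` represented by an extended word. -/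
def eprod (n : ℕ) (W : List ELetter) : BraidGroup n :=
  (W.map (eletterProd n)).prod

/-- The element of `B_n` represented by a positive extended word,
coded as a list of pairs `(a, i)` standing for the letters `ₐσᵢ` (no inverses). -/
def eposProd (n : ℕ) (P : List (ZMod 4 × ℕ)) : BraidGroup n :=
  (P.map (fun x => es n x.1 x.2)).prod

/-- A standard word is a list of pairs `(i, e)` standing for the letters `σᵢ^{±1}`;
this is the element of `B_n` it represents. -/
def sprod (n : ℕ) (V : List (ℕ × Bool)) : BraidGroup n :=
  (V.map (fun x => if x.2 then s n x.1 else (s n x.1)⁻¹)).prod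

/-- The element of `B_n` represented by a positive standard word (a list of indices). -/
def posProd (n : ℕ) (P : List ℕ) : BraidGroup n :=
  (P.map (s n)).prod

/-- The shift `sh(d, ₐσⱼ^{e}) = ₍ₐ₊d₎σⱼ^{f}`, with `f = e` if `d ∈ {0,2}` and
`f = -e` if `d ∈ {1,3}`. -/
def sh (d : ZMod 4) (x : ELetter) : ELetter :=
  (x.1 + d, x.2.1, if d = 0 ∨ d = 2 then x.2.2 else !x.2.2)

/-- One step of the inductive definition of the separation of an extended word. -/
def sepStep (t : List (ZMod 4) × ZMod 4 × List (ZMod 4)) (x : ELetter) :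
    List (ZMod 4) × ZMod 4 × List (ZMod 4) :=
  if x.2.2 = false then (t.1, t.2.1, t.2.2 ++ [-t.2.1])
  else
    match t.2.2 with
    | [] => (t.1 ++ [0], t.2.1, [])
    | a :: L'' => (t.1 ++ [a + t.2.1 + 1], t.2.1 + 2, L'' ++ [3 - t.2.1])

/-- The separation `(L, δ, L')` of an extended word, defined inductively from the left. -/
def separation (W : List ELetter) : List (ZMod 4) × ZMod 4 × List (ZMod 4) :=
  W.foldl sepStep ([], 0, [])

/-- The bishift `SH2(L, δ, L', W)`: the first `|L|` letters of `W` are shifted by the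
entries of `L`, the remaining letters are shifted by `δ +` the entries of `L'`. -/
def SH2 (L : List (ZMod 4)) (δ : ZMod 4) (L' : List (ZMod 4)) (W : List ELetter) :
    List ELetter :=
  List.zipWith sh L (W.take L.length) ++
    List.zipWith sh (L'.map (fun d => δ + d)) (W.drop L.length)


lemma rel_one {n : ℕ} {r : FreeGroup (Fin (n-1))} (h : r ∈ braidRels n) :
    (QuotientGroup.mk r : BraidGroup n) = 1 :=
  (QuotientGroup.eq_one_iff r).mpr (Subgroup.subset_normalClosure h)
lemma s_eq_of {n : ℕ} {p : ℕ} (h1 : 1 ≤ p) (h2 : p ≤ n - 1) :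
    s n p = PresentedGroup.of (⟨p - 1, by omega⟩ : Fin (n - 1)) := by
  simp [s, h1, h2]
lemma s_comm {n : ℕ} {p q : ℕ} (h : p + 2 ≤ q) :
    s n p * s n q = s n q * s n p := by
  by_cases h1 : 1 ≤ p
  · by_cases h2 : q ≤ n - 1
    · have hrel : (FreeGroup.of (⟨p-1, by omega⟩ : Fin (n-1)) * FreeGroup.of ⟨q-1, by omega⟩ *
          (FreeGroup.of (⟨p-1, by omega⟩ : Fin (n-1)))⁻¹ * (FreeGroup.of (⟨q-1, by omega⟩ : Fin (n-1)))⁻¹) ∈ braidRels n := by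
        left; exact ⟨⟨p-1, by omega⟩, ⟨q-1, by omega⟩, by simp; omega, rfl⟩
      have h' : (PresentedGroup.of (⟨p-1, by omega⟩ : Fin (n-1)) : BraidGroup n) *
          PresentedGroup.of ⟨q-1, by omega⟩ * (PresentedGroup.of (⟨p-1, by omega⟩ : Fin (n-1)))⁻¹ *
          (PresentedGroup.of (⟨q-1, by omega⟩ : Fin (n-1)))⁻¹ = 1 := rel_one hrel
      rw [s_eq_of h1 (by omega), s_eq_of (by omega : 1 ≤ q) h2]
      exact mul_inv_eq_iff_eq_mul.mp (mul_inv_eq_one.mp h')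
    · have : s n q = 1 := by simp [s]; omega
      simp [this]
  · have : s n p = 1 := by simp [s]; omega
    simp [this]
lemma s_braid {n : ℕ} {p : ℕ} (h1 : 1 ≤ p) (h2 : p + 1 ≤ n - 1) :
    s n p * s n (p+1) * s n p = s n (p+1) * s n p * s n (p+1) := by
  have hrel : (FreeGroup.of (⟨p-1, by omega⟩ : Fin (n-1)) * FreeGroup.of ⟨p+1-1, by omega⟩ *
      FreeGroup.of (⟨p-1, by omega⟩ : Fin (n-1)) *
      (FreeGroup.of (⟨p+1-1, by omega⟩ : Fin (n-1)) * FreeGroup.of ⟨p-1, by omega⟩ *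
        FreeGroup.of (⟨p+1-1, by omega⟩ : Fin (n-1)))⁻¹) ∈ braidRels n := by
    right; exact ⟨⟨p-1, by omega⟩, ⟨p+1-1, by omega⟩, by simp; omega, rfl⟩
  have h' : (PresentedGroup.of (⟨p-1, by omega⟩ : Fin (n-1)) : BraidGroup n) *
      PresentedGroup.of ⟨p+1-1, by omega⟩ * PresentedGroup.of ⟨p-1, by omega⟩ *
      ((PresentedGroup.of (⟨p+1-1, by omega⟩ : Fin (n-1)) : BraidGroup n) *
        PresentedGroup.of ⟨p-1, by omega⟩ * PresentedGroup.of ⟨p+1-1, by omega⟩)⁻¹ = 1 :=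
    rel_one hrel
  rw [s_eq_of h1 (by omega), s_eq_of (by omega : 1 ≤ p+1) h2]
  exact mul_inv_eq_one.mp h'


/-- descending product σ_m σ_{m-1} ⋯ σ_1 -/
def dsc (n m : ℕ) : BraidGroup n := (((List.range m).reverse).map (fun k => s n (k+1))).prod
/-- ascending product σ_1 ⋯ σ_m -/
def asc (n m : ℕ) : BraidGroup n := ((List.range m).map (fun k => s n (k+1))).prod
/-- Δ⟨m⟩ = d_1 d_2 ⋯ d_m -/
def dl (n m : ℕ) : BraidGroup n := ((List.range m).map (fun r => dsc n (r+1))).prod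

lemma dsc_succ (n m : ℕ) : dsc n (m+1) = s n (m+1) * dsc n m := by
  simp [dsc, List.range_succ]
lemma asc_succ (n m : ℕ) : asc n (m+1) = asc n m * s n (m+1) := by
  simp [asc, List.range_succ]
lemma dl_succ (n m : ℕ) : dl n (m+1) = dl n m * dsc n (m+1) := by
  simp [dl, List.range_succ]
lemma dsc_zero (n : ℕ) : dsc n 0 = 1 := rfl
lemma asc_zero (n : ℕ) : asc n 0 = 1 := rfl
lemma dl_zero (n : ℕ) : dl n 0 = 1 := rfl
lemma halfTwist_eq_dl (n : ℕ) : halfTwist n = dl n (n-1) := rfl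

/-- σ_p commutes with d_m if m + 1 ≤ p - 1 -/
lemma s_comm_dsc {n : ℕ} {p m : ℕ} (h : m + 1 ≤ p - 1) (hp : 1 ≤ p) :
    s n p * dsc n m = dsc n m * s n p := by
  induction m with
  | zero => simp [dsc_zero]
  | succ k ih =>
      rw [dsc_succ]
      calc s n p * (s n (k+1) * dsc n k) = (s n p * s n (k+1)) * dsc n k := by
            rw [mul_assoc]
        _ = (s n (k+1) * s n p) * dsc n k := by
            rw [s_comm (show (k+1) + 2 ≤ p by omega)]
        _ = s n (k+1) * (s n p * dsc n k) := by rw [mul_assoc]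
        _ = s n (k+1) * (dsc n k * s n p) := by rw [ih (by omega)]
        _ = s n (k+1) * dsc n k * s n p := by rw [mul_assoc]
lemma s_comm_asc {n : ℕ} {p m : ℕ} (h : m + 1 ≤ p - 1) (hp : 1 ≤ p) :
    s n p * asc n m = asc n m * s n p := by
  induction m with
  | zero => simp [asc_zero]
  | succ k ih =>
      rw [asc_succ]
      calc s n p * (asc n k * s n (k+1)) = (s n p * asc n k) * s n (k+1) := by
            rw [mul_assoc]
        _ = (asc n k * s n p) * s n (k+1) := by rw [ih (by omega)]
        _ = asc n k * (s n p * s n (k+1)) := by rw [mul_assoc]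
        _ = asc n k * (s n (k+1) * s n p) := by
            rw [← s_comm (show (k+1) + 2 ≤ p by omega)]
        _ = asc n k * s n (k+1) * s n p := by rw [mul_assoc]
lemma s_comm_dl {n : ℕ} {p m : ℕ} (h : m + 1 ≤ p - 1) (hp : 1 ≤ p) :
    s n p * dl n m = dl n m * s n p := by
  induction m with
  | zero => simp [dl_zero]
  | succ k ih =>
      rw [dl_succ]
      calc s n p * (dl n k * dsc n (k+1)) = (s n p * dl n k) * dsc n (k+1) := by
            rw [mul_assoc]
        _ = (dl n k * s n p) * dsc n (k+1) := by rw [ih (by omega)]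
        _ = dl n k * (s n p * dsc n (k+1)) := by rw [mul_assoc]
        _ = dl n k * (dsc n (k+1) * s n p) := by rw [s_comm_dsc (by omega) hp]
        _ = dl n k * dsc n (k+1) * s n p := by rw [mul_assoc]

/-- shift: d_m σ_{i+1} = σ_i d_m for 1 ≤ i, i+1 ≤ m ≤ n-1 -/
lemma dsc_shift {n : ℕ} : ∀ {m i : ℕ}, 1 ≤ i → i + 1 ≤ m → m ≤ n - 1 →
    dsc n m * s n (i+1) = s n i * dsc n m := by
  intro m
  induction m with
  | zero => intro i h1 h2 hm; omega
  | succ k ih =>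
      intro i h1 h2 hm
      rcases Nat.lt_or_ge (i+1) (k+1) with hlt | hge
      · rw [dsc_succ]
        calc s n (k+1) * dsc n k * s n (i+1) = s n (k+1) * (dsc n k * s n (i+1)) := by
              rw [mul_assoc]
          _ = s n (k+1) * (s n i * dsc n k) := by rw [ih h1 (by omega) (by omega)]
          _ = (s n (k+1) * s n i) * dsc n k := by rw [mul_assoc]
          _ = (s n i * s n (k+1)) * dsc n k := by
              rw [← s_comm (show i + 2 ≤ k + 1 by omega)]
          _ = s n i * (s n (k+1) * dsc n k) := by rw [mul_assoc]
      · -- i = k, write i = j+1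
        obtain ⟨j, rfl⟩ : ∃ j, i = j + 1 := ⟨i - 1, by omega⟩
        have hik : k = j + 1 := by omega
        subst hik
        have e1 : dsc n (j+1+1) = s n (j+2) * s n (j+1) * dsc n j := by
          rw [dsc_succ, dsc_succ, ← mul_assoc]
        have hb := s_braid (n := n) (p := j+1) (by omega) (by omega : j+1+1 ≤ n-1)
        simp only [show j+1+1 = j+2 from rfl] at hb
        rw [e1]
        calc s n (j+2) * s n (j+1) * dsc n j * s n (j+1+1)
            = s n (j+2) * s n (j+1) * (dsc n j * s n (j+2)) := by
              simp only [show j+1+1 = j+2 from rfl, mul_assoc]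
          _ = s n (j+2) * s n (j+1) * (s n (j+2) * dsc n j) := by
              rw [← s_comm_dsc (show j + 1 ≤ (j+2) - 1 by omega) (by omega)]
          _ = (s n (j+2) * s n (j+1) * s n (j+2)) * dsc n j := by
              simp only [mul_assoc]
          _ = (s n (j+1) * s n (j+2) * s n (j+1)) * dsc n j := by rw [← hb]
          _ = s n (j+1) * (s n (j+2) * s n (j+1) * dsc n j) := by
              simp only [mul_assoc]
/-- shift: a_m σ_i = σ_{i+1} a_m for 1 ≤ i, i+1 ≤ m ≤ n-1 -/
lemma asc_shift {n : ℕ} : ∀ {m i : ℕ}, 1 ≤ i → i + 1 ≤ m → m ≤ n - 1 →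
    asc n m * s n i = s n (i+1) * asc n m := by
  intro m
  induction m with
  | zero => intro i h1 h2 hm; omega
  | succ k ih =>
      intro i h1 h2 hm
      rcases Nat.lt_or_ge (i+1) (k+1) with hlt | hge
      · rw [asc_succ]
        calc asc n k * s n (k+1) * s n i = asc n k * (s n (k+1) * s n i) := by
              rw [mul_assoc]
          _ = asc n k * (s n i * s n (k+1)) := by
              rw [s_comm (show i + 2 ≤ k + 1 by omega)]
          _ = (asc n k * s n i) * s n (k+1) := by rw [mul_assoc]
          _ = (s n (i+1) * asc n k) * s n (k+1) := by rw [ih h1 (by omega) (by omega)]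
          _ = s n (i+1) * (asc n k * s n (k+1)) := by rw [mul_assoc]
      · obtain ⟨j, rfl⟩ : ∃ j, i = j + 1 := ⟨i - 1, by omega⟩
        have hik : k = j + 1 := by omega
        subst hik
        have e1 : asc n (j+1+1) = asc n j * s n (j+1) * s n (j+2) := by
          rw [asc_succ, asc_succ]
        have hb := s_braid (n := n) (p := j+1) (by omega) (by omega : j+1+1 ≤ n-1)
        simp only [show j+1+1 = j+2 from rfl] at hb
        rw [e1]
        calc asc n j * s n (j+1) * s n (j+2) * s n (j+1)
            = asc n j * (s n (j+1) * s n (j+2) * s n (j+1)) := by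
              simp only [mul_assoc]
          _ = asc n j * (s n (j+2) * s n (j+1) * s n (j+2)) := by rw [hb]
          _ = (asc n j * s n (j+2)) * (s n (j+1) * s n (j+2)) := by
              simp only [mul_assoc]
          _ = (s n (j+2) * asc n j) * (s n (j+1) * s n (j+2)) := by
              rw [s_comm_asc (show j + 1 ≤ (j+2) - 1 by omega) (by omega)]
          _ = s n (j+1+1) * (asc n j * s n (j+1) * s n (j+2)) := by
              simp only [show j+1+1 = j+2 from rfl, mul_assoc]

/-- Δ⟨m+1⟩ = a_{m+1} Δ⟨m⟩ -/
lemma dl_asc (n : ℕ) : ∀ m : ℕ, dl n (m+1) = asc n (m+1) * dl n m := by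
  intro m
  induction m with
  | zero => simp [dl_succ, dsc_succ, asc_succ, dl_zero, asc_zero, dsc_zero]
  | succ k ih =>
      calc dl n (k+1+1) = dl n (k+1) * dsc n (k+2) := by
            rw [dl_succ]
        _ = asc n (k+1) * dl n k * (s n (k+2) * dsc n (k+1)) := by
            rw [ih, dsc_succ]
        _ = asc n (k+1) * (dl n k * s n (k+2)) * dsc n (k+1) := by
            simp only [mul_assoc]
        _ = asc n (k+1) * (s n (k+2) * dl n k) * dsc n (k+1) := by
            rw [← s_comm_dl (show k + 1 ≤ (k+2) - 1 by omega) (by omega)]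
        _ = (asc n (k+1) * s n (k+2)) * (dl n k * dsc n (k+1)) := by
            simp only [mul_assoc]
        _ = asc n (k+1+1) * dl n (k+1) := by
            conv_rhs => rw [asc_succ, dl_succ]

/-- Main shift lemma: Δ⟨m⟩ σ_i = σ_{m+1-i} Δ⟨m⟩ for 1 ≤ i ≤ m ≤ n-1 -/
lemma dl_shift {n : ℕ} : ∀ {m i : ℕ}, 1 ≤ i → i ≤ m → m ≤ n - 1 →
    dl n m * s n i = s n (m + 1 - i) * dl n m := by
  intro m
  induction m with
  | zero => intro i h1 h2 hm; omega
  | succ k ih =>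
      intro i h1 h2 hm
      rcases Nat.lt_or_ge 1 i with hgt | hle
      · -- 2 ≤ i
        obtain ⟨j, rfl⟩ : ∃ j, i = j + 2 := ⟨i - 2, by omega⟩
        have hd := dsc_shift (n := n) (m := k+1) (i := j+1) (by omega) (by omega) hm
        simp only [show j+1+1 = j+2 from rfl] at hd
        rw [dl_succ]
        calc dl n k * dsc n (k+1) * s n (j+2)
            = dl n k * (dsc n (k+1) * s n (j+2)) := by rw [mul_assoc]
          _ = dl n k * (s n (j+1) * dsc n (k+1)) := by rw [hd]
          _ = (dl n k * s n (j+1)) * dsc n (k+1) := by rw [mul_assoc]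
          _ = (s n (k + 1 - (j+1)) * dl n k) * dsc n (k+1) := by
              rw [ih (by omega) (by omega) (by omega)]
          _ = s n (k + 1 + 1 - (j+2)) * (dl n k * dsc n (k+1)) := by
              rw [mul_assoc, show k + 1 - (j+1) = k + 1 + 1 - (j+2) by omega]
      · -- i = 1
        have hi : i = 1 := by omega
        subst hi
        rcases Nat.eq_zero_or_pos k with hk | hk
        · subst hk
          simp [dl_succ, dl_zero, dsc_succ, dsc_zero]
        · rw [dl_asc]
          calc asc n (k+1) * dl n k * s n 1
              = asc n (k+1) * (dl n k * s n 1) := by rw [mul_assoc]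
            _ = asc n (k+1) * (s n (k + 1 - 1) * dl n k) := by
                rw [ih (by omega) (by omega) (by omega)]
            _ = asc n (k+1) * (s n k * dl n k) := by
                rw [show k + 1 - 1 = k from rfl]
            _ = (asc n (k+1) * s n k) * dl n k := by rw [mul_assoc]
            _ = (s n (k+1) * asc n (k+1)) * dl n k := by
                rw [asc_shift (by omega) (by omega) hm]
            _ = s n (k + 1 + 1 - 1) * (asc n (k+1) * dl n k) := by
                rw [mul_assoc, show k + 1 + 1 - 1 = k + 1 from rfl]

/-- Fundamental flip: Δ σ_i = σ_{n-i} Δ -/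
lemma halfTwist_flip {n : ℕ} {i : ℕ} (h1 : 1 ≤ i) (h2 : i ≤ n - 1) :
    halfTwist n * s n i = s n (n - i) * halfTwist n := by
  rw [halfTwist_eq_dl]
  have := dl_shift (n := n) (m := n-1) (i := i) h1 h2 (le_refl _)
  rwa [show n - 1 + 1 - i = n - i by omega] at this



lemma es0 (n i) : es n 0 i = s n i := by simp [es]
lemma es1 (n i) : es n 1 i = halfTwist n * (s n i)⁻¹ := by
  simp [es, (by decide : (1 : ZMod 4) ≠ 0)]
lemma es2 (n i) : es n 2 i = s n (n - i) := by
  simp [es, (by decide : (2 : ZMod 4) ≠ 0), (by decide : (2 : ZMod 4) ≠ 1)]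
lemma es3 (n i) : es n 3 i = halfTwist n * (s n (n - i))⁻¹ := by
  simp [es, (by decide : (3 : ZMod 4) ≠ 0), (by decide : (3 : ZMod 4) ≠ 1),
    (by decide : (3 : ZMod 4) ≠ 2)]

/-- Δ (s k)⁻¹ = (s (n-k))⁻¹ Δ -/
lemma flip_inv {n k : ℕ} (h1 : 1 ≤ k) (h2 : k ≤ n - 1) :
    halfTwist n * (s n k)⁻¹ = (s n (n - k))⁻¹ * halfTwist n := by
  have h := halfTwist_flip h1 h2
  calc halfTwist n * (s n k)⁻¹
      = (s n (n-k))⁻¹ * (s n (n-k) * halfTwist n) * (s n k)⁻¹ := by group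
    _ = (s n (n-k))⁻¹ * (halfTwist n * s n k) * (s n k)⁻¹ := by rw [h]
    _ = (s n (n-k))⁻¹ * halfTwist n := by group

/-- Δ (s (n-k))⁻¹ = (s k)⁻¹ Δ -/
lemma flip_inv' {n k : ℕ} (h1 : 1 ≤ k) (h2 : k ≤ n - 1) :
    halfTwist n * (s n (n - k))⁻¹ = (s n k)⁻¹ * halfTwist n := by
  have := flip_inv (n := n) (k := n - k) (by omega) (by omega)
  rwa [show n - (n - k) = k by omega] at this

lemma swapA {n i j : ℕ} (hi1 : 1 ≤ i) (hi2 : i ≤ n - 1) (hj1 : 1 ≤ j) (hj2 : j ≤ n - 1) :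
    (s n j)⁻¹ * s n i =
      (halfTwist n * (s n (n - j))⁻¹) * (halfTwist n * (s n (n - i))⁻¹)⁻¹ := by
  rw [flip_inv' hj1 hj2, flip_inv' hi1 hi2]; group

lemma swapB {n i j : ℕ} (hj1 : 1 ≤ j) (hj2 : j ≤ n - 1) :
    (s n j)⁻¹ * (halfTwist n * (s n i)⁻¹) =
      (halfTwist n * (s n (n - j))⁻¹) * (s n i)⁻¹ := by
  rw [flip_inv' hj1 hj2]; group

lemma swapC {n i j : ℕ} (hi1 : 1 ≤ i) (hi2 : i ≤ n - 1) :
    (halfTwist n * (s n j)⁻¹)⁻¹ * s n i =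
      s n j * (halfTwist n * (s n (n - i))⁻¹)⁻¹ := by
  rw [flip_inv' hi1 hi2]; group

lemma swapD {n i j : ℕ} :
    (halfTwist n * (s n j)⁻¹)⁻¹ * (halfTwist n * (s n i)⁻¹) =
      s n j * (s n i)⁻¹ := by group

lemma zmod4_cases (a : ZMod 4) : a = 0 ∨ a = 1 ∨ a = 2 ∨ a = 3 := by
  revert a; decide

/-- The key swap: `Y⁻¹ X = X' Y'⁻¹` with indices exchanged. -/
lemma es_swap {n : ℕ} (a b : ZMod 4) {i j : ℕ}
    (hi1 : 1 ≤ i) (hi2 : i ≤ n - 1) (hj1 : 1 ≤ j) (hj2 : j ≤ n - 1) :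
    (es n b j)⁻¹ * es n a i = es n (b + 3) j * (es n (a + 3) i)⁻¹ := by
  have hni : n - (n - i) = i := by omega
  have hnj : n - (n - j) = j := by omega
  have hi1' : 1 ≤ n - i := by omega
  have hi2' : n - i ≤ n - 1 := by omega
  have hj1' : 1 ≤ n - j := by omega
  have hj2' : n - j ≤ n - 1 := by omega
  rcases zmod4_cases a with rfl | rfl | rfl | rfl <;>
    rcases zmod4_cases b with rfl | rfl | rfl | rfl <;>
      simp only [(by decide : (0 : ZMod 4) + 3 = 3), (by decide : (1 : ZMod 4) + 3 = 0),
        (by decide : (2 : ZMod 4) + 3 = 1), (by decide : (3 : ZMod 4) + 3 = 2),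
        es0, es1, es2, es3]
  · exact swapA hi1 hi2 hj1 hj2
  · exact swapC hi1 hi2
  · have := swapA hi1 hi2 hj1' hj2'; rwa [hnj] at this
  · exact swapC hi1 hi2
  · exact swapB hj1 hj2
  · exact swapD
  · have := swapB (i := i) hj1' hj2'; rwa [hnj] at this
  · exact swapD
  · have := swapA hi1' hi2' hj1 hj2; rwa [hni] at this
  · have := swapC (i := n - i) (j := j) hi1' hi2'; rwa [hni] at this
  · have := swapA hi1' hi2' hj1' hj2'; rwa [hni, hnj] at this
  · have := swapC (i := n - i) (j := n - j) hi1' hi2'; rwa [hni] at this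
  · exact swapB hj1 hj2
  · exact swapD
  · have := swapB (i := n - i) hj1' hj2'; rwa [hnj] at this
  · exact swapD



lemma eprod_append (n : ℕ) (V W : List ELetter) :
    eprod n (V ++ W) = eprod n V * eprod n W := by
  simp [eprod]

lemma eposProd_cons (n : ℕ) (q : ZMod 4 × ℕ) (Q : List (ZMod 4 × ℕ)) :
    eposProd n (q :: Q) = es n q.1 q.2 * eposProd n Q := by
  simp [eposProd]

/-- Push a positive extended letter leftward through the inverse of a positive word. -/
def push (x : ZMod 4 × ℕ) : List (ZMod 4 × ℕ) → (ZMod 4 × ℕ) × List (ZMod 4 × ℕ)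
  | [] => (x, [])
  | q :: Q =>
      let r := push (q.1 + 3, q.2) Q
      (r.1, (x.1 + 3, x.2) :: r.2)

lemma push_idx (x : ZMod 4 × ℕ) (Q : List (ZMod 4 × ℕ)) :
    (push x Q).2.map Prod.snd ++ [(push x Q).1.2] = x.2 :: Q.map Prod.snd := by
  induction Q generalizing x with
  | nil => simp [push]
  | cons q Q ih =>
      simp only [push, List.map_cons, List.cons_append]
      rw [ih]

lemma push_spec (n : ℕ) (x : ZMod 4 × ℕ) (Q : List (ZMod 4 × ℕ))
    (hx : 1 ≤ x.2 ∧ x.2 ≤ n - 1) (hQ : ∀ q ∈ Q, 1 ≤ q.2 ∧ q.2 ≤ n - 1) :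
    (eposProd n Q)⁻¹ * es n x.1 x.2 =
      es n (push x Q).1.1 (push x Q).1.2 * (eposProd n (push x Q).2)⁻¹ := by
  induction Q generalizing x with
  | nil => simp [push, eposProd]
  | cons q Q ih =>
      have hq := hQ q List.mem_cons_self
      have hQ' : ∀ q' ∈ Q, 1 ≤ q'.2 ∧ q'.2 ≤ n - 1 :=
        fun q' hq' => hQ q' (List.mem_cons_of_mem q hq')
      have hswap := es_swap (n := n) x.1 q.1 hx.1 hx.2 hq.1 hq.2
      have hrec := ih (q.1 + 3, q.2) ⟨hq.1, hq.2⟩ hQ'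
      simp only [push, eposProd_cons]
      calc (es n q.1 q.2 * eposProd n Q)⁻¹ * es n x.1 x.2
          = (eposProd n Q)⁻¹ * ((es n q.1 q.2)⁻¹ * es n x.1 x.2) := by group
        _ = (eposProd n Q)⁻¹ * (es n (q.1 + 3) q.2 * (es n (x.1 + 3) x.2)⁻¹) := by
            rw [hswap]
        _ = ((eposProd n Q)⁻¹ * es n (q.1 + 3) q.2) * (es n (x.1 + 3) x.2)⁻¹ := by
            group
        _ = (es n (push (q.1 + 3, q.2) Q).1.1 (push (q.1 + 3, q.2) Q).1.2 *
              (eposProd n (push (q.1 + 3, q.2) Q).2)⁻¹) * (es n (x.1 + 3) x.2)⁻¹ := by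
            rw [hrec]
        _ = es n (push (q.1 + 3, q.2) Q).1.1 (push (q.1 + 3, q.2) Q).1.2 *
              (eposProd n ((x.1 + 3, x.2) :: (push (q.1 + 3, q.2) Q).2))⁻¹ := by
            rw [eposProd_cons]; group

theorem general_extended_division' (n : ℕ) (hn : 3 ≤ n) (W : List ELetter)
    (hW : ∀ x ∈ W, 1 ≤ x.2.1 ∧ x.2.1 ≤ n - 1) :
    ∃ P Q : List (ZMod 4 × ℕ),
      (∀ y ∈ P, 1 ≤ y.2 ∧ y.2 ≤ n - 1) ∧
      (∀ y ∈ Q, 1 ≤ y.2 ∧ y.2 ≤ n - 1) ∧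
      eprod n W = eposProd n P * (eposProd n Q)⁻¹ ∧
      P.length + Q.length = W.length ∧
      P.length = W.countP (fun x => x.2.2) ∧
      P.map Prod.snd ++ (Q.map Prod.snd).reverse = W.map (fun x => x.2.1) := by
  induction W using List.reverseRecOn with
  | nil => exact ⟨[], [], by simp, by simp, by simp [eprod, eposProd], by simp, by simp, by simp⟩
  | append_singleton W' x ih =>
      obtain ⟨P', Q', hP', hQ', hprod', hlen', hcount', hidx'⟩ :=
        ih (fun y hy => hW y (List.mem_append_left _ hy))
      have hx : 1 ≤ x.2.1 ∧ x.2.1 ≤ n - 1 :=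
        hW x (List.mem_append_right _ (List.mem_singleton_self x))
      have heprod : eprod n (W' ++ [x]) = eprod n W' * eletterProd n x := by
        simp [eprod_append, eprod]
      by_cases he : x.2.2
      · -- positive letter: push it through Q'
        set r := push (x.1, x.2.1) Q' with hr
        have hspec := push_spec n (x.1, x.2.1) Q' hx hQ'
        have hidxp := push_idx (x.1, x.2.1) Q'
        refine ⟨P' ++ [r.1], r.2, ?_, ?_, ?_, ?_, ?_, ?_⟩
        · intro y hy
          rcases List.mem_append.mp hy with h | h
          · exact hP' y h
          · have : y = r.1 := List.mem_singleton.mp h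
            subst this
            -- r.1.2 is in x.2.1 :: Q'.map snd by hidxp
            have : r.1.2 ∈ (x.1, x.2.1).2 :: Q'.map Prod.snd := by
              rw [← hidxp]; exact List.mem_append_right _ (List.mem_singleton_self _)
            rcases List.mem_cons.mp this with h' | h'
            · rw [h']; exact hx
            · obtain ⟨q, hq, hq2⟩ := List.mem_map.mp h'
              rw [← hq2]; exact hQ' q hq
        · intro y hy
          have : y.2 ∈ r.2.map Prod.snd := List.mem_map.mpr ⟨y, hy, rfl⟩
          have : y.2 ∈ (x.1, x.2.1).2 :: Q'.map Prod.snd := by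
            rw [← hidxp]; exact List.mem_append_left _ this
          rcases List.mem_cons.mp this with h' | h'
          · rw [h']; exact hx
          · obtain ⟨q, hq, hq2⟩ := List.mem_map.mp h'
            rw [← hq2]; exact hQ' q hq
        · rw [heprod, hprod']
          have hel : eletterProd n x = es n x.1 x.2.1 := by simp [eletterProd, he]
          rw [hel]
          calc eposProd n P' * (eposProd n Q')⁻¹ * es n x.1 x.2.1
              = eposProd n P' * ((eposProd n Q')⁻¹ * es n x.1 x.2.1) := by group
            _ = eposProd n P' * (es n r.1.1 r.1.2 * (eposProd n r.2)⁻¹) := by rw [hspec]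
            _ = (eposProd n P' * es n r.1.1 r.1.2) * (eposProd n r.2)⁻¹ := by group
            _ = eposProd n (P' ++ [r.1]) * (eposProd n r.2)⁻¹ := by
                simp [eposProd]
        · have hlenr : r.2.length = Q'.length := by
            have := congrArg List.length hidxp
            simpa using this
          simp only [List.length_append, List.length_singleton, hlenr]
          omega
        · rw [List.countP_append]
          simp only [List.length_append, List.length_singleton]
          rw [← hcount']
          simp [List.countP_singleton, he]
        · have key : [r.1.2] ++ (r.2.map Prod.snd).reverse =
              (Q'.map Prod.snd).reverse ++ [x.2.1] := by
            have h2 := congrArg List.reverse hidxp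
            simpa using h2
          rw [List.map_append, List.map_append]
          simp only [List.map_cons, List.map_nil]
          rw [List.append_assoc, key, ← List.append_assoc, hidx']
      · -- negative letter
        have he' : x.2.2 = false := by simpa using he
        refine ⟨P', (x.1, x.2.1) :: Q', hP', ?_, ?_, ?_, ?_, ?_⟩
        · intro y hy
          rcases List.mem_cons.mp hy with h | h
          · rw [h]; exact hx
          · exact hQ' y h
        · rw [heprod, hprod']
          have hel : eletterProd n x = (es n x.1 x.2.1)⁻¹ := by simp [eletterProd, he']
          rw [hel, eposProd_cons]
          group
        · simp only [List.length_cons, List.length_append, List.length_singleton,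
            List.length_nil]
          omega
        · rw [List.countP_append, ← hcount']
          simp [List.countP_singleton, he']
        · simp only [List.map_cons, List.map_append, List.reverse_cons]
          rw [← List.append_assoc, hidx']
          simp
  


/-- General extended division (Theorem 2, existence form): every extended word `W`
of `B_n` is equivalent to `P·Q⁻¹` with `P, Q` positive extended words, where
`|P| + |Q| = |W|`, `|P|` is the number of positive letters of `W`, and `W` and
`P·Q⁻¹` have the same sequence of right indices. -/
theorem general_extended_division (n : ℕ) (hn : 3 ≤ n) (W : List ELetter)
    (hW : ∀ x ∈ W, 1 ≤ x.2.1 ∧ x.2.1 ≤ n - 1) :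
    ∃ P Q : List (ZMod 4 × ℕ),
      (∀ y ∈ P, 1 ≤ y.2 ∧ y.2 ≤ n - 1) ∧
      (∀ y ∈ Q, 1 ≤ y.2 ∧ y.2 ≤ n - 1) ∧
      eprod n W = eposProd n P * (eposProd n Q)⁻¹ ∧
      P.length + Q.length = W.length ∧
      P.length = W.countP (fun x => x.2.2) ∧
      P.map Prod.snd ++ (Q.map Prod.snd).reverse = W.map (fun x => x.2.1) := by
  exact general_extended_division' n hn W hW

end Braid
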